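/- For any d ≥ 1 and any vectors g, v ∈ ℝ^d with v ≠ 0, −⟨g, v⟩/‖v‖ ≤ −(1/3)‖g‖ + (8/3)‖v − g‖. -/

import Mathlib

theorem normalized_descent (d : ℕ) (hd : 1 ≤ d)
    (g v : EuclideanSpace ℝ (Fin d)) (hv : v ≠ 0) :
    -inner ℝ g v / ‖v‖ ≤ -(1 / 3) * ‖g‖ + (8 / 3) * ‖v - g‖ := by
  have hvn : (0:ℝ) < ‖v‖ := norm_pos_iff.mpr hv
  have h1 : (inner ℝ g v : ℝ) = ‖v‖ ^ 2 - inner ℝ (v - g) v := by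
    rw [inner_sub_left, real_inner_self_eq_norm_sq]; ring
  have h2 : (inner ℝ (v - g) v : ℝ) ≤ ‖v - g‖ * ‖v‖ := real_inner_le_norm _ _
  have h3 : ‖g‖ ≤ ‖v‖ + ‖v - g‖ := by
    calc ‖g‖ = ‖v - (v - g)‖ := by rw [sub_sub_cancel]
    _ ≤ ‖v‖ + ‖v - g‖ := norm_sub_le _ _
  rw [div_le_iff₀ hvn]
  nlinarith [norm_nonneg (v - g), norm_nonneg g]
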